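/- Let X be compact Hausdorff and A a closed subalgebra of C(X,ℂ) containing constants. Then the union of two peak sets with respect to A is a peak set with respect to A. -/

import Mathlib

open Complex

noncomputable def sq0 (z : ℂ) : ℂ := if z = 0 then 0 else Complex.exp (Complex.log z / 2)

lemma sq0_zero : sq0 0 = 0 := if_pos rfl

lemma sq0_sq (z : ℂ) : sq0 z ^ 2 = z := by
  unfold sq0
  split
  · simp [*]
  · rw [sq, ← Complex.exp_add, add_halves, Complex.exp_log ‹z ≠ 0›]

lemma div_two_re (w : ℂ) : (w / 2).re = w.re / 2 := by
  have : (2 : ℂ) = ((2:ℝ) : ℂ) := by norm_num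
  rw [this, Complex.div_ofReal_re]

lemma div_two_im (w : ℂ) : (w / 2).im = w.im / 2 := by
  have : (2 : ℂ) = ((2:ℝ) : ℂ) := by norm_num
  rw [this, Complex.div_ofReal_im]

lemma sq0_re_nonneg {z : ℂ} (hz : 0 ≤ z.re) : 0 ≤ (sq0 z).re := by
  unfold sq0
  split
  · simp
  · rw [Complex.exp_re, div_two_im, Complex.log_im]
    have harg : |Complex.arg z| ≤ Real.pi / 2 := Complex.abs_arg_le_pi_div_two_iff.mpr hz
    have := Real.pi_pos
    apply mul_nonneg (Real.exp_nonneg _)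
    apply Real.cos_nonneg_of_mem_Icc
    rw [abs_le] at harg
    constructor <;> [linarith [harg.1]; linarith [harg.2]]

lemma sq0_re_pos {z : ℂ} (hz : 0 < z.re) : 0 < (sq0 z).re := by
  have hz0 : z ≠ 0 := by intro h; rw [h] at hz; simp at hz
  unfold sq0
  rw [if_neg hz0, Complex.exp_re, div_two_im, Complex.log_im]
  have harg : |Complex.arg z| < Real.pi / 2 :=
    Complex.abs_arg_lt_pi_div_two_iff.mpr (Or.inl hz)
  have := Real.pi_pos
  apply mul_pos (Real.exp_pos _)
  apply Real.cos_pos_of_mem_Ioo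
  rw [abs_lt] at harg
  constructor <;> linarith [harg.1, harg.2]

lemma sq0_re_im (z : ℂ) : (sq0 z).re ^ 2 - (sq0 z).im ^ 2 = z.re := by
  have h := congrArg Complex.re (sq0_sq z)
  rw [sq, Complex.mul_re] at h
  nlinarith [h]

lemma sq0_im_sq_le {z : ℂ} (hz : 0 ≤ z.re) : (sq0 z).im ^ 2 ≤ (sq0 z).re ^ 2 := by
  nlinarith [sq0_re_im z]

lemma myAbsLtOfSq {p q : ℝ} (hp : 0 ≤ p) (h : q ^ 2 < p ^ 2) : |q| < p := by
  rw [← Real.sqrt_sq hp, ← Real.sqrt_sq_eq_abs]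
  exact Real.sqrt_lt_sqrt (sq_nonneg _) h

lemma myAbsLeOfSq {p q : ℝ} (hp : 0 ≤ p) (h : q ^ 2 ≤ p ^ 2) : |q| ≤ p := by
  rw [← Real.sqrt_sq hp, ← Real.sqrt_sq_eq_abs]
  exact Real.sqrt_le_sqrt h

lemma sq0_mul_re_pos {z w : ℂ} (hz : 0 < z.re) (hw : 0 < w.re) :
    0 < (sq0 z * sq0 w).re := by
  have h1 := sq0_re_pos hz
  have h2 := sq0_re_pos hw
  have h3 : |(sq0 z).im| < (sq0 z).re :=
    myAbsLtOfSq h1.le (by nlinarith [sq0_re_im z])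
  have h4 : |(sq0 w).im| < (sq0 w).re :=
    myAbsLtOfSq h2.le (by nlinarith [sq0_re_im w])
  have h5 : |(sq0 z).im| * |(sq0 w).im| < (sq0 z).re * (sq0 w).re :=
    mul_lt_mul'' h3 h4 (abs_nonneg _) (abs_nonneg _)
  have h6 : (sq0 z).im * (sq0 w).im ≤ |(sq0 z).im| * |(sq0 w).im| := by
    rw [← abs_mul]; exact le_abs_self _
  rw [Complex.mul_re]
  linarith

lemma sq0_sub_abs_le {z w : ℂ} (hz : 0 ≤ z.re) (hw : 0 ≤ w.re) :
    ‖sq0 z - sq0 w‖ ≤ Real.sqrt ‖z - w‖ := by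
  set a := sq0 z with ha
  set b := sq0 w with hb
  have har := sq0_re_nonneg hz
  have hbr := sq0_re_nonneg hw
  have haim := sq0_im_sq_le hz
  have hbim := sq0_im_sq_le hw
  have key : ‖a - b‖ ≤ ‖a + b‖ := by
    rw [Complex.norm_def, Complex.norm_def]
    apply Real.sqrt_le_sqrt
    simp only [Complex.normSq_apply, Complex.sub_re, Complex.sub_im, Complex.add_re,
      Complex.add_im]
    have h5 : |a.im| ≤ a.re := myAbsLeOfSq har haim
    have h6 : |b.im| ≤ b.re := myAbsLeOfSq hbr hbim
    have h7 : |a.im| * |b.im| ≤ a.re * b.re :=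
      mul_le_mul h5 h6 (abs_nonneg _) har
    have h8 : -(a.re * b.re) ≤ a.im * b.im := by
      have := neg_abs_le (a.im * b.im)
      rw [abs_mul] at this
      linarith
    nlinarith
  have habs : ‖a - b‖ ^ 2 ≤ ‖z - w‖ := by
    have : ‖a - b‖ * ‖a + b‖ = ‖z - w‖ := by
      rw [← norm_mul]
      congr 1
      have : (a - b) * (a + b) = a ^ 2 - b ^ 2 := by ring
      rw [this, sq0_sq, sq0_sq]
    nlinarith [norm_nonneg (a - b)]
  calc ‖a - b‖ = Real.sqrt (‖a - b‖ ^ 2) := by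
        rw [Real.sqrt_sq (norm_nonneg _)]
    _ ≤ Real.sqrt ‖z - w‖ := Real.sqrt_le_sqrt habs

section wfacts

variable {u : ℂ}

lemma one_add_ne (hu : 0 ≤ u.re) : 1 + u ≠ 0 := by
  intro h
  have : (1 + u).re = 0 := by rw [h]; simp
  simp only [Complex.add_re, Complex.one_re] at this
  linarith

lemma w_re_nonneg (hu : 0 ≤ u.re) : 0 ≤ (u / (1 + u)).re := by
  have h := one_add_ne hu
  rw [Complex.div_re]
  have hsq : 0 < Complex.normSq (1 + u) := Complex.normSq_pos.mpr h
  have h1 : (1 + u).re = 1 + u.re := by simp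
  have h2 : (1 + u).im = u.im := by simp
  rw [h1, h2]
  have h3 : 0 ≤ u.re * (1 + u.re) + u.im * u.im := by nlinarith [sq_nonneg u.im]
  rw [← add_div]
  exact div_nonneg h3 hsq.le

lemma w_re_pos (hu : 0 < u.re) : 0 < (u / (1 + u)).re := by
  have h := one_add_ne hu.le
  rw [Complex.div_re]
  have hsq : 0 < Complex.normSq (1 + u) := Complex.normSq_pos.mpr h
  have h1 : (1 + u).re = 1 + u.re := by simp
  have h2 : (1 + u).im = u.im := by simp
  rw [h1, h2]
  have h3 : 0 < u.re * (1 + u.re) + u.im * u.im := by nlinarith [sq_nonneg u.im]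
  rw [← add_div]
  exact div_pos h3 hsq

lemma w_one_sub_abs (hu : 0 ≤ u.re) : ‖1 - u / (1 + u)‖ ≤ 1 := by
  have h := one_add_ne hu
  have key : 1 - u / (1 + u) = 1 / (1 + u) := by field_simp; ring
  rw [key]
  rw [norm_div, norm_one]
  rw [div_le_one (norm_pos_iff.mpr h)]
  calc (1 : ℝ) = (1 + u).re - u.re := by simp
    _ ≤ (1 + u).re := by linarith
    _ ≤ ‖1 + u‖ := Complex.re_le_norm _

end wfacts

section cx

variable {X : Type*} [TopologicalSpace X] [CompactSpace X]

lemma mem_of_hasSum (A : Subalgebra ℂ C(X, ℂ)) (hA : IsClosed (A : Set C(X, ℂ)))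
    {h : ℕ → C(X, ℂ)} (hm : ∀ n, h n ∈ A) {T : C(X, ℂ)} (H : HasSum h T) : T ∈ A :=
  hA.mem_of_tendsto H (Filter.Eventually.of_forall fun s => Subalgebra.sum_mem A fun i _ => hm i)

lemma norm_one_le : ‖(1 : C(X, ℂ))‖ ≤ 1 := by
  rw [ContinuousMap.norm_le _ zero_le_one]
  intro x
  simp

lemma series_exists (A : Subalgebra ℂ C(X, ℂ)) (hA : IsClosed (A : Set C(X, ℂ)))
    {b : C(X, ℂ)} (hb : b ∈ A) (k : ℕ → ℂ)
    (hs : Summable fun n => ‖k n‖ * ‖b‖ ^ n) :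
    ∃ T ∈ A, ∀ x, HasSum (fun n => k n * (b x) ^ n) (T x) := by
  have hnorm : ∀ n, ‖k n • b ^ n‖ ≤ ‖k n‖ * ‖b‖ ^ n := by
    intro n
    rw [norm_smul]
    apply mul_le_mul_of_nonneg_left _ (norm_nonneg _)
    cases n with
    | zero => simpa using norm_one_le
    | succ m => exact norm_pow_le' b m.succ_pos
  have hsummable : Summable fun n => k n • b ^ n := Summable.of_norm_bounded hs hnorm
  refine ⟨∑' n, k n • b ^ n, mem_of_hasSum A hA
    (fun n => Subalgebra.smul_mem A (pow_mem hb n) _) hsummable.hasSum, fun x => ?_⟩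
  have := ContinuousMap.hasSum_apply hsummable.hasSum x
  simpa [smul_eq_mul] using this

end cx

section eps

variable {X : Type*} [TopologicalSpace X] [CompactSpace X]

lemma eps_step (A : Subalgebra ℂ C(X, ℂ)) (hA : IsClosed (A : Set C(X, ℂ)))
    {F : C(X, ℂ)} (hFA : F ∈ A)
    (hW1 : ∀ x, ‖1 - F x‖ ≤ 1) (hWre : ∀ x, 0 ≤ (F x).re)
    {ε : ℝ} (hε : 0 < ε) (hε1 : ε ≤ 1) :
    ∃ S ∈ A, ∀ x, S x = sq0 ((ε : ℂ) + (1 - (ε : ℂ)) * F x) := by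
  set B : C(X, ℂ) := ((1 - ε : ℝ) : ℂ) • (1 - F) with hB
  have hBA : B ∈ A := Subalgebra.smul_mem A (Subalgebra.sub_mem A (Subalgebra.one_mem A) hFA) _
  have hBx : ∀ x, B x = ((1 - ε : ℝ) : ℂ) * (1 - F x) := by
    intro x; simp [hB, smul_eq_mul]
  have hBxabs : ∀ x, ‖B x‖ ≤ 1 - ε := by
    intro x
    rw [hBx x]
    rw [norm_mul]
    calc ‖((1 - ε : ℝ) : ℂ)‖ * ‖1 - F x‖ ≤ (1 - ε) * 1 := by
          apply mul_le_mul _ (hW1 x) (norm_nonneg _) (by linarith)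
          simp only [Complex.norm_real, Real.norm_eq_abs]
          exact le_of_eq (abs_of_nonneg (by linarith))
      _ = 1 - ε := mul_one _
  have hBnorm : ‖B‖ ≤ 1 - ε := by
    rw [ContinuousMap.norm_le _ (by linarith)]
    exact hBxabs
  have hBlt : ‖B‖ < 1 := lt_of_le_of_lt hBnorm (by linarith)
  -- log series
  have hk2 : Summable fun j : ℕ => ‖((j : ℂ))⁻¹‖ * ‖B‖ ^ j := by
    apply Summable.of_nonneg_of_le (fun j => by positivity)
      (fun j => ?_) (summable_geometric_of_lt_one (norm_nonneg B) hBlt)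
    rcases Nat.eq_zero_or_pos j with rfl | hj
    · simp
    · calc ‖((j : ℂ))⁻¹‖ * ‖B‖ ^ j ≤ 1 * ‖B‖ ^ j := by
            apply mul_le_mul_of_nonneg_right _ (by positivity)
            rw [norm_inv, RCLike.norm_natCast]
            rw [inv_le_one_iff₀]
            right; exact_mod_cast hj
        _ = ‖B‖ ^ j := one_mul _
  obtain ⟨L, hLA, hLsum⟩ := series_exists A hA hBA _ hk2
  have hLx : ∀ x, L x = -Complex.log (1 - B x) := by
    intro x
    have h1 : ‖B x‖ < 1 := lt_of_le_of_lt (hBxabs x) (by linarith)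
    have h2 := Complex.hasSum_taylorSeries_neg_log h1
    have h3 : (fun j : ℕ => ((j : ℂ))⁻¹ * (B x) ^ j) = fun j : ℕ => (B x) ^ j / j := by
      funext j; rw [div_eq_mul_inv, mul_comm]
    exact HasSum.unique (hLsum x) (h3 ▸ h2)
  -- exp series
  set M : C(X, ℂ) := (-(2 : ℂ)⁻¹) • L with hM
  have hMA : M ∈ A := Subalgebra.smul_mem A hLA _
  have hk3 : Summable fun j : ℕ => ‖((j.factorial : ℂ))⁻¹‖ * ‖M‖ ^ j := by
    have : (fun j : ℕ => ‖((j.factorial : ℂ))⁻¹‖ * ‖M‖ ^ j)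
        = fun j : ℕ => ‖M‖ ^ j / (j.factorial : ℝ) := by
      funext j
      rw [norm_inv, RCLike.norm_natCast, div_eq_mul_inv, mul_comm]
    rw [this]
    exact Real.summable_pow_div_factorial ‖M‖
  obtain ⟨S, hSA, hSsum⟩ := series_exists A hA hMA _ hk3
  refine ⟨S, hSA, fun x => ?_⟩
  have hMx : M x = Complex.log ((ε : ℂ) + (1 - (ε : ℂ)) * F x) / 2 := by
    have h4 : (1 : ℂ) - B x = (ε : ℂ) + (1 - (ε : ℂ)) * F x := by
      rw [hBx x]; push_cast; ring
    simp only [hM, ContinuousMap.smul_apply, smul_eq_mul, hLx x, h4]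
    ring
  have hexp := NormedSpace.exp_series_hasSum_exp' (𝕂 := ℂ) (M x)
  have h5 : (fun j : ℕ => ((j.factorial : ℂ))⁻¹ * (M x) ^ j)
      = fun j : ℕ => ((j.factorial)⁻¹ : ℂ) • (M x) ^ j := by
    funext j; rw [smul_eq_mul]
  have h6 : S x = NormedSpace.exp (M x) := HasSum.unique (h5 ▸ hSsum x) hexp
  have hne : (ε : ℂ) + (1 - (ε : ℂ)) * F x ≠ 0 := by
    intro h
    have h7 : ((ε : ℂ) + (1 - (ε : ℂ)) * F x).re = ε + (1 - ε) * (F x).re := by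
      simp only [Complex.add_re, Complex.ofReal_re]
      congr 1
      have : ((1 : ℂ) - (ε : ℂ)) = (((1 - ε : ℝ)) : ℂ) := by push_cast; ring
      rw [this, Complex.re_ofReal_mul]
    rw [h] at h7
    simp only [Complex.zero_re] at h7
    nlinarith [hWre x]
  rw [h6, ← Complex.exp_eq_exp_ℂ, hMx, sq0, if_neg hne]

lemma key_sqrt (A : Subalgebra ℂ C(X, ℂ)) (hA : IsClosed (A : Set C(X, ℂ)))
    {f : C(X, ℂ)} (hf : f ∈ A) (hre : ∀ x, 0 ≤ (f x).re) :
    ∃ S ∈ A, ∃ W : X → ℂ,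
      (∀ x, S x = sq0 (W x)) ∧ (∀ x, 0 ≤ (W x).re) ∧
      (∀ x, f x = 0 → W x = 0) ∧ (∀ x, 0 < (f x).re → 0 < (W x).re) := by
  classical
  -- Step 1: normalize
  set c : ℝ := (1 + ‖f‖)⁻¹ with hc
  have hcpos : 0 < c := by positivity
  set b : C(X, ℂ) := (c : ℂ) • f with hb
  have hbA : b ∈ A := Subalgebra.smul_mem A hf _
  have hbx : ∀ x, b x = (c : ℂ) * f x := fun x => by simp [hb, smul_eq_mul]
  have hbre : ∀ x, 0 ≤ (b x).re := by
    intro x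
    rw [hbx x, Complex.re_ofReal_mul]
    exact mul_nonneg hcpos.le (hre x)
  have hbnorm : ‖b‖ < 1 := by
    rw [hb, norm_smul, Complex.norm_real, Real.norm_eq_abs, _root_.abs_of_nonneg hcpos.le]
    rw [hc, inv_mul_lt_one₀ (by positivity)]
    linarith [norm_nonneg f]
  have hbxlt : ∀ x, ‖b x‖ < 1 :=
    fun x => lt_of_le_of_lt (ContinuousMap.norm_coe_le_norm b x) hbnorm
  set W : X → ℂ := fun x => b x / (1 + b x) with hW
  -- the geometric series for W
  set k : ℕ → ℂ := fun n => if n = 0 then 0 else (-1) ^ (n + 1) with hk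
  have hks : Summable fun n => ‖k n‖ * ‖b‖ ^ n := by
    apply Summable.of_nonneg_of_le (fun j => by positivity) (fun j => ?_)
      (summable_geometric_of_lt_one (norm_nonneg b) hbnorm)
    rcases eq_or_ne j 0 with rfl | hj
    · simp [hk]
    · have : ‖k j‖ = 1 := by simp [hk, hj]
      rw [this, one_mul]
  obtain ⟨F, hFA, hFsum⟩ := series_exists A hA hbA k hks
  have hFW : ∀ x, F x = W x := by
    intro x
    have hgeo := (hasSum_geometric_of_norm_lt_one (by rw [norm_neg]; exact hbxlt x : ‖-(b x)‖ < 1)).mul_left (b x)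
    have h1 : (fun n : ℕ => k (n + 1) * b x ^ (n + 1)) = fun n : ℕ => b x * (-(b x)) ^ n := by
      funext n
      have : k (n + 1) = (-1) ^ n := by
        simp only [hk, if_neg (Nat.succ_ne_zero n)]
        rw [pow_succ, pow_succ]
        ring
      rw [this, neg_pow]
      ring
    have h2 : (1 - -(b x))⁻¹ = (1 + b x)⁻¹ := by rw [sub_neg_eq_add]
    have h3 : HasSum (fun n : ℕ => k (n + 1) * b x ^ (n + 1)) (b x * (1 + b x)⁻¹) := by
      rw [h1]
      rw [← h2]
      exact hgeo
    have h4 : HasSum (fun n : ℕ => k n * b x ^ n) (b x * (1 + b x)⁻¹) := by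
      have h6 : k 0 = 0 := by simp [hk]
      have h5 := (hasSum_nat_add_iff' (f := fun n : ℕ => k n * b x ^ n) (g := b x * (1 + b x)⁻¹) 1)
      simp only [Finset.range_one, Finset.sum_singleton, pow_zero, mul_one, h6, zero_mul,
        sub_zero] at h5
      exact h5.mp h3
    have := HasSum.unique (hFsum x) h4
    rw [this]
    show _ = b x / (1 + b x)
    rw [div_eq_mul_inv]
  have hWre : ∀ x, 0 ≤ (W x).re := fun x => w_re_nonneg (hbre x)
  have hW1 : ∀ x, ‖1 - F x‖ ≤ 1 := by
    intro x
    rw [hFW x]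
    exact w_one_sub_abs (hbre x)
  have hFre : ∀ x, 0 ≤ (F x).re := fun x => by rw [hFW x]; exact hWre x
  -- Step 2: the approximating sequence
  have hchoice : ∀ n : ℕ, ∃ S ∈ A,
      ∀ x, S x = sq0 ((((n : ℝ) + 1)⁻¹ : ℝ) + (1 - ((((n : ℝ) + 1)⁻¹ : ℝ)) : ℂ) * F x) := by
    intro n
    have hεpos : 0 < ((n : ℝ) + 1)⁻¹ := by positivity
    have hε1 : ((n : ℝ) + 1)⁻¹ ≤ 1 := by
      rw [inv_le_one_iff₀]; right; linarith [Nat.cast_nonneg (α := ℝ) n]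
    exact eps_step A hA hFA hW1 hFre hεpos hε1
  choose Sseq hSseqA hSseqx using hchoice
  -- the target values
  have haval : ∀ (n : ℕ) (x : X),
      ((((n : ℝ) + 1)⁻¹ : ℝ) : ℂ) + (1 - ((((n : ℝ) + 1)⁻¹ : ℝ) : ℂ)) * F x
        = W x + (((((n : ℝ) + 1)⁻¹ : ℝ)) : ℂ) * (1 - W x) := by
    intro n x
    rw [hFW x]; ring
  have hare : ∀ (n : ℕ) (x : X),
      0 ≤ (((((n : ℝ) + 1)⁻¹ : ℝ) : ℂ) + (1 - ((((n : ℝ) + 1)⁻¹ : ℝ) : ℂ)) * F x).re := by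
    intro n x
    have hεpos : (0:ℝ) < ((n : ℝ) + 1)⁻¹ := by positivity
    have hε1 : ((n : ℝ) + 1)⁻¹ ≤ 1 := by
      rw [inv_le_one_iff₀]; right; linarith [Nat.cast_nonneg (α := ℝ) n]
    have : ((1 : ℂ) - ((((n : ℝ) + 1)⁻¹ : ℝ) : ℂ)) = (((1 - ((n : ℝ) + 1)⁻¹ : ℝ)) : ℂ) := by
      push_cast; ring
    rw [Complex.add_re, this, Complex.re_ofReal_mul, Complex.ofReal_re, hFW x]
    have := hWre x
    nlinarith
  -- distance estimates
  have hdist : ∀ (n m : ℕ) (x : X),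
      dist (Sseq n x) (Sseq m x) ≤
        Real.sqrt (|((n : ℝ) + 1)⁻¹ - ((m : ℝ) + 1)⁻¹|) := by
    intro n m x
    rw [hSseqx n x, hSseqx m x, dist_eq_norm]
    calc ‖_‖ ≤ Real.sqrt (norm
          ((((((n : ℝ) + 1)⁻¹ : ℝ) : ℂ) + (1 - ((((n : ℝ) + 1)⁻¹ : ℝ) : ℂ)) * F x)
          - ((((((m : ℝ) + 1)⁻¹ : ℝ) : ℂ) + (1 - ((((m : ℝ) + 1)⁻¹ : ℝ) : ℂ)) * F x)))) :=
          sq0_sub_abs_le (hare n x) (hare m x)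
      _ ≤ Real.sqrt (|((n : ℝ) + 1)⁻¹ - ((m : ℝ) + 1)⁻¹|) := by
          apply Real.sqrt_le_sqrt
          rw [haval n x, haval m x]
          have h7 : (W x + ((((n : ℝ) + 1)⁻¹ : ℝ) : ℂ) * (1 - W x))
              - (W x + ((((m : ℝ) + 1)⁻¹ : ℝ) : ℂ) * (1 - W x))
              = (((((n : ℝ) + 1)⁻¹ - ((m : ℝ) + 1)⁻¹ : ℝ)) : ℂ) * (1 - W x) := by
            push_cast; ring
          rw [h7, norm_mul, Complex.norm_real, Real.norm_eq_abs]
          calc |((n : ℝ) + 1)⁻¹ - ((m : ℝ) + 1)⁻¹| * ‖1 - W x‖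
              ≤ |((n : ℝ) + 1)⁻¹ - ((m : ℝ) + 1)⁻¹| * 1 := by
                apply mul_le_mul_of_nonneg_left _ (abs_nonneg _)
                rw [← hFW x]
                exact hW1 x
            _ = _ := mul_one _
  -- Step 3: limit
  have hb0 : Filter.Tendsto (fun N : ℕ => Real.sqrt (((N : ℝ) + 1)⁻¹)) Filter.atTop (nhds 0) := by
    have h0 : Filter.Tendsto (fun N : ℕ => ((N : ℝ) + 1)⁻¹) Filter.atTop (nhds 0) := by
      simpa only [one_div] using (tendsto_one_div_add_atTop_nhds_zero_nat :
        Filter.Tendsto (fun n : ℕ => 1 / ((n : ℝ) + 1)) Filter.atTop (nhds 0))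
    have h1 : Filter.Tendsto (fun N : ℕ => Real.sqrt (((N : ℝ) + 1)⁻¹)) Filter.atTop
        (nhds (Real.sqrt 0)) := (Real.continuous_sqrt.tendsto 0).comp h0
    simpa using h1
  have hcauchy : CauchySeq Sseq := by
    apply cauchySeq_of_le_tendsto_0 (fun N : ℕ => Real.sqrt (((N : ℝ) + 1)⁻¹)) _ hb0
    intro n m N hn hm
    rw [dist_eq_norm, ContinuousMap.norm_le _ (Real.sqrt_nonneg _)]
    intro x
    have h8 := hdist n m x
    rw [dist_eq_norm] at h8
    have h9 : (Sseq n - Sseq m) x = Sseq n x - Sseq m x := by simp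
    rw [h9]
    refine le_trans h8 (Real.sqrt_le_sqrt ?_)
    have hn1 : ((n : ℝ) + 1)⁻¹ ≤ ((N : ℝ) + 1)⁻¹ := by
      apply inv_anti₀ (by positivity)
      exact_mod_cast Nat.add_le_add_right hn 1
    have hm1 : ((m : ℝ) + 1)⁻¹ ≤ ((N : ℝ) + 1)⁻¹ := by
      apply inv_anti₀ (by positivity)
      exact_mod_cast Nat.add_le_add_right hm 1
    have hn0 : (0:ℝ) < ((n : ℝ) + 1)⁻¹ := by positivity
    have hm0 : (0:ℝ) < ((m : ℝ) + 1)⁻¹ := by positivity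
    rw [abs_le]
    constructor <;> linarith
  obtain ⟨S, hS⟩ := cauchySeq_tendsto_of_complete hcauchy
  refine ⟨S, hA.mem_of_tendsto hS (Filter.Eventually.of_forall hSseqA), W, fun x => ?_, hWre,
    fun x hfx => ?_, fun x hpos => ?_⟩
  · have h1 : Filter.Tendsto (fun n => Sseq n x) Filter.atTop (nhds (S x)) :=
      ((continuous_eval_const x).tendsto S).comp hS
    have h2 : Filter.Tendsto (fun n => Sseq n x) Filter.atTop (nhds (sq0 (W x))) := by
      rw [tendsto_iff_dist_tendsto_zero]
      apply squeeze_zero (fun n => dist_nonneg) (fun n => ?_) hb0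
      rw [hSseqx n x, dist_eq_norm]
      calc ‖_‖ ≤ Real.sqrt (norm
            ((((((n : ℝ) + 1)⁻¹ : ℝ) : ℂ) + (1 - ((((n : ℝ) + 1)⁻¹ : ℝ) : ℂ)) * F x) - W x)) :=
            sq0_sub_abs_le (hare n x) (hWre x)
        _ ≤ Real.sqrt (((n : ℝ) + 1)⁻¹) := by
            apply Real.sqrt_le_sqrt
            have h7 : ((((((n : ℝ) + 1)⁻¹ : ℝ) : ℂ) + (1 - ((((n : ℝ) + 1)⁻¹ : ℝ) : ℂ)) * F x)
                - W x) = (((((n : ℝ) + 1)⁻¹ : ℝ)) : ℂ) * (1 - W x) := by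
              rw [haval n x]; ring
            rw [h7, norm_mul, Complex.norm_real, Real.norm_eq_abs]
            have h10 : (0:ℝ) < ((n : ℝ) + 1)⁻¹ := by positivity
            calc |((n : ℝ) + 1)⁻¹| * ‖1 - W x‖
                ≤ |((n : ℝ) + 1)⁻¹| * 1 := by
                  apply mul_le_mul_of_nonneg_left _ (abs_nonneg _)
                  rw [← hFW x]
                  exact hW1 x
              _ = ((n : ℝ) + 1)⁻¹ := by rw [mul_one, _root_.abs_of_nonneg h10.le]
    exact tendsto_nhds_unique h1 h2
  · have hbx0 : b x = 0 := by rw [hbx x, hfx, mul_zero]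
    show b x / (1 + b x) = 0
    rw [hbx0, zero_div]
  · apply w_re_pos
    rw [hbx x, Complex.re_ofReal_mul]
    exact mul_pos hcpos hpos

end eps

/-- `H` is a peak set with respect to the function algebra `A ⊆ C(X, ℂ)`:
there is `f ∈ A` vanishing on `H` with `Re f > 0` off `H`. -/
def IsPeakSet {X : Type*} [TopologicalSpace X] (A : Set C(X, ℂ)) (H : Set X) : Prop :=
  IsClosed H ∧ ∃ f ∈ A, (∀ x ∈ H, f x = 0) ∧ ∀ x ∉ H, 0 < (f x).re

theorem stmt11 (X : Type*) [TopologicalSpace X] [CompactSpace X] [T2Space X]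
    (A : Subalgebra ℂ C(X, ℂ)) (hA : IsClosed (A : Set C(X, ℂ)))
    (H₀ H₁ : Set X) (h₀ : IsPeakSet (A : Set C(X, ℂ)) H₀)
    (h₁ : IsPeakSet (A : Set C(X, ℂ)) H₁) :
    IsPeakSet (A : Set C(X, ℂ)) (H₀ ∪ H₁) := by
  obtain ⟨hc₀, f₀, hf₀A, hf₀z, hf₀p⟩ := h₀
  obtain ⟨hc₁, f₁, hf₁A, hf₁z, hf₁p⟩ := h₁
  have hre₀ : ∀ x, 0 ≤ (f₀ x).re := by
    intro x
    by_cases hx : x ∈ H₀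
    · rw [hf₀z x hx]; simp
    · exact (hf₀p x hx).le
  have hre₁ : ∀ x, 0 ≤ (f₁ x).re := by
    intro x
    by_cases hx : x ∈ H₁
    · rw [hf₁z x hx]; simp
    · exact (hf₁p x hx).le
  obtain ⟨S₀, hS₀A, W₀, hS₀x, hW₀re, hW₀z, hW₀p⟩ := key_sqrt A hA hf₀A hre₀
  obtain ⟨S₁, hS₁A, W₁, hS₁x, hW₁re, hW₁z, hW₁p⟩ := key_sqrt A hA hf₁A hre₁
  refine ⟨hc₀.union hc₁, S₀ * S₁, mul_mem hS₀A hS₁A, fun x hx => ?_, fun x hx => ?_⟩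
  · rcases hx with hx | hx
    · have hz : W₀ x = 0 := hW₀z x (hf₀z x hx)
      rw [ContinuousMap.mul_apply, hS₀x x, hz, sq0_zero, zero_mul]
    · have hz : W₁ x = 0 := hW₁z x (hf₁z x hx)
      rw [ContinuousMap.mul_apply, hS₁x x, hz, sq0_zero, mul_zero]
  · rw [Set.mem_union, not_or] at hx
    have p0 : 0 < (W₀ x).re := hW₀p x (hf₀p x hx.1)
    have p1 : 0 < (W₁ x).re := hW₁p x (hf₁p x hx.2)
    rw [ContinuousMap.mul_apply, hS₀x x, hS₁x x]
    exact sq0_mul_re_pos p0 p1
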